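/- Int(ℤ) is atomic: every nonzero nonunit element of Int(ℤ) can be written as a finite product of irreducible elements of Int(ℤ). -/

import Mathlib

open Polynomial

/-- The ring of integer-valued polynomials `Int(ℤ) = {f ∈ ℚ[X] | f(ℤ) ⊆ ℤ}`,
as a subring of ℚ[X]. -/
noncomputable def IntValued : Subring (Polynomial ℚ) where
  carrier := {f | ∀ c : ℤ, ∃ m : ℤ, f.eval (c : ℚ) = (m : ℚ)}
  zero_mem' := fun c => ⟨0, by simp⟩
  one_mem' := fun c => ⟨1, by simp⟩
  add_mem' := by
    rintro f g hf hg c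
    obtain ⟨m, hm⟩ := hf c
    obtain ⟨n, hn⟩ := hg c
    exact ⟨m + n, by simp [hm, hn]⟩
  mul_mem' := by
    rintro f g hf hg c
    obtain ⟨m, hm⟩ := hf c
    obtain ⟨n, hn⟩ := hg c
    exact ⟨m * n, by simp [hm, hn]⟩
  neg_mem' := by
    rintro f hf c
    obtain ⟨m, hm⟩ := hf c
    exact ⟨-m, by simp [hm]⟩

namespace IVAux

lemma mem_iff (f : Polynomial ℚ) :
    f ∈ IntValued ↔ ∀ c : ℤ, ∃ m : ℤ, f.eval (c : ℚ) = (m : ℚ) := Iff.rfl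

noncomputable def ev (f : IntValued) (n : ℤ) : ℤ :=
  Classical.choose ((mem_iff (f : Polynomial ℚ)).mp f.2 n)

lemma ev_spec (f : IntValued) (n : ℤ) :
    ((ev f n : ℤ) : ℚ) = (f : Polynomial ℚ).eval (n : ℚ) :=
  (Classical.choose_spec ((mem_iff (f : Polynomial ℚ)).mp f.2 n)).symm

lemma ev_mul (g h : IntValued) (n : ℤ) : ev (g * h) n = ev g n * ev h n := by
  have : ((ev (g * h) n : ℤ) : ℚ) = ((ev g n * ev h n : ℤ) : ℚ) := by
    push_cast
    rw [ev_spec, ev_spec, ev_spec]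
    push_cast
    rw [eval_mul]
  exact_mod_cast this

lemma coe_ne_zero {f : IntValued} (hf : f ≠ 0) : (f : Polynomial ℚ) ≠ 0 :=
  fun h => hf (ZeroMemClass.coe_eq_zero.mp h)

lemma exists_pt {f : IntValued} (hf : f ≠ 0) :
    ∃ n : ℤ, (f : Polynomial ℚ).eval (n : ℚ) ≠ 0 := by
  have hf' := coe_ne_zero hf
  have hfin : {x : ℚ | (f : Polynomial ℚ).IsRoot x}.Finite :=
    Polynomial.finite_setOf_isRoot hf'
  have hinj : Function.Injective (fun n : ℤ => (n : ℚ)) := fun a b hab => by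
    simpa using hab
  have hinf : (Set.range (fun n : ℤ => (n : ℚ))).Infinite :=
    Set.infinite_range_of_injective hinj
  obtain ⟨x, hx, hxr⟩ := hinf.exists_notMem_finite hfin
  obtain ⟨n, rfl⟩ := hx
  exact ⟨n, hxr⟩

/-- set of natAbs of nonzero values -/
def vset (f : IntValued) : Set ℕ :=
  {k | ∃ n : ℤ, (f : Polynomial ℚ).eval (n : ℚ) ≠ 0 ∧ (ev f n).natAbs = k}

noncomputable def mu (f : IntValued) : ℕ := sInf (vset f)

lemma vset_nonempty {f : IntValued} (hf : f ≠ 0) : (vset f).Nonempty := by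
  obtain ⟨n, hn⟩ := exists_pt hf
  exact ⟨(ev f n).natAbs, n, hn, rfl⟩

lemma mu_mem {f : IntValued} (hf : f ≠ 0) : mu f ∈ vset f :=
  Nat.sInf_mem (vset_nonempty hf)

lemma mu_le {f : IntValued} {n : ℤ} (hn : (f : Polynomial ℚ).eval (n : ℚ) ≠ 0) :
    mu f ≤ (ev f n).natAbs :=
  Nat.sInf_le ⟨n, hn, rfl⟩

lemma ev_ne_zero {f : IntValued} {n : ℤ}
    (hn : (f : Polynomial ℚ).eval (n : ℚ) ≠ 0) : ev f n ≠ 0 := by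
  intro h
  apply hn
  rw [← ev_spec, h]
  simp

lemma mu_pos {f : IntValued} (hf : f ≠ 0) : 1 ≤ mu f := by
  obtain ⟨n, hn, he⟩ := mu_mem hf
  have h1 : 0 < (ev f n).natAbs := Int.natAbs_pos.mpr (ev_ne_zero hn)
  omega

noncomputable def N (f : IntValued) : ℕ := (f : Polynomial ℚ).natDegree + mu f

/-- A degree-0 nonzero nonunit of IntValued has all values of absolute value ≥ 2. -/
lemma const_two_le {h : IntValued} (hd : (h : Polynomial ℚ).natDegree = 0)
    (h0 : h ≠ 0) (hu : ¬IsUnit h) (n : ℤ) : 2 ≤ (ev h n).natAbs := by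
  have hC : (h : Polynomial ℚ) = C ((h : Polynomial ℚ).coeff 0) :=
    Polynomial.eq_C_of_natDegree_eq_zero hd
  have hev : ∀ m : ℤ, ((ev h m : ℤ) : ℚ) = (h : Polynomial ℚ).coeff 0 := by
    intro m
    rw [ev_spec, hC]
    simp
  by_contra hlt
  push_neg at hlt
  have hne : ev h n ≠ 0 := by
    intro hz
    apply coe_ne_zero h0
    have h1 := hev n
    rw [hz] at h1
    simp only [Int.cast_zero] at h1
    rw [hC, ← h1, map_zero]
  have h1 : (ev h n).natAbs = 1 := by
    have := Int.natAbs_pos.mpr hne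
    omega
  have hmm : ev h n * ev h n = 1 := by
    rcases Int.natAbs_eq_iff.mp h1 with h' | h' <;> rw [h'] <;> ring
  apply hu
  apply IsUnit.of_mul_eq_one (a := h) h
  apply Subtype.ext
  show (h : Polynomial ℚ) * (h : Polynomial ℚ) = 1
  have hc : (h : Polynomial ℚ).coeff 0 * (h : Polynomial ℚ).coeff 0 = 1 := by
    rw [← hev n]
    have : ((ev h n * ev h n : ℤ) : ℚ) = ((1 : ℤ) : ℚ) := by rw [hmm]
    push_cast at this
    simpa using this
  conv_lhs => rw [hC]
  rw [← C_mul, hc, map_one]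

lemma N_lt_left (g h : IntValued) (hg0 : g ≠ 0) (hh0 : h ≠ 0) (hhu : ¬IsUnit h) :
    N g < N (g * h) := by
  have hgh0 : g * h ≠ 0 := mul_ne_zero hg0 hh0
  obtain ⟨n, hn, he⟩ := mu_mem hgh0
  have hmul : ((g * h : IntValued) : Polynomial ℚ) = (g : Polynomial ℚ) * (h : Polynomial ℚ) := rfl
  rw [hmul, eval_mul] at hn
  have hgn : (g : Polynomial ℚ).eval (n : ℚ) ≠ 0 := fun hz => hn (by rw [hz, zero_mul])
  have hhn : (h : Polynomial ℚ).eval (n : ℚ) ≠ 0 := fun hz => hn (by rw [hz, mul_zero])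
  have hgle : mu g ≤ (ev g n).natAbs := mu_le hgn
  have heq : (ev g n).natAbs * (ev h n).natAbs = mu (g * h) := by
    rw [← he, ev_mul, Int.natAbs_mul]
  have hga : 1 ≤ (ev g n).natAbs := Int.natAbs_pos.mpr (ev_ne_zero hgn)
  have hha : 1 ≤ (ev h n).natAbs := Int.natAbs_pos.mpr (ev_ne_zero hhn)
  have hdeg : ((g * h : IntValued) : Polynomial ℚ).natDegree
      = (g : Polynomial ℚ).natDegree + (h : Polynomial ℚ).natDegree := by
    rw [hmul]
    exact natDegree_mul (coe_ne_zero hg0) (coe_ne_zero hh0)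
  unfold N
  rcases Nat.eq_zero_or_pos (h : Polynomial ℚ).natDegree with hd0 | hdpos
  · have h2 := const_two_le hd0 hh0 hhu n
    have h2a : (ev g n).natAbs * 2 ≤ mu (g * h) := by
      calc (ev g n).natAbs * 2 ≤ (ev g n).natAbs * (ev h n).natAbs :=
            Nat.mul_le_mul_left _ h2
        _ = mu (g * h) := heq
    omega
  · have ha : (ev g n).natAbs ≤ mu (g * h) := by
      calc (ev g n).natAbs = (ev g n).natAbs * 1 := (Nat.mul_one _).symm
        _ ≤ (ev g n).natAbs * (ev h n).natAbs := Nat.mul_le_mul_left _ hha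
        _ = mu (g * h) := heq
    omega

theorem aux : ∀ k : ℕ, ∀ f : IntValued, N f ≤ k → f ≠ 0 → ¬IsUnit f →
    ∃ l : Multiset IntValued, (∀ g ∈ l, Irreducible g) ∧ l.prod = f := by
  intro k
  induction k with
  | zero =>
    intro f hk hf0 _
    have := mu_pos hf0
    have : 1 ≤ N f := le_trans this (Nat.le_add_left _ _)
    omega
  | succ k ih =>
    intro f hk hf0 hfu
    by_cases hi : Irreducible f
    · exact ⟨{f}, by simpa using hi, by simp⟩
    · rw [irreducible_iff] at hi
      push_neg at hi
      obtain ⟨g, h, rfl, hgu, hhu⟩ := hi hfu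
      have hg0 : g ≠ 0 := fun hg => hf0 (by simp [hg])
      have hh0 : h ≠ 0 := fun hh => hf0 (by simp [hh])
      have h1 : N g < N (g * h) := N_lt_left g h hg0 hh0 hhu
      have h2 : N h < N (g * h) := by
        have := N_lt_left h g hh0 hg0 hgu
        rwa [mul_comm] at this
      obtain ⟨lg, hlg, hlgp⟩ := ih g (by omega) hg0 hgu
      obtain ⟨lh, hlh, hlhp⟩ := ih h (by omega) hh0 hhu
      refine ⟨lg + lh, ?_, by rw [Multiset.prod_add, hlgp, hlhp]⟩
      intro x hx
      rcases Multiset.mem_add.mp hx with hx | hx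
      · exact hlg x hx
      · exact hlh x hx

end IVAux

/-- Remark 2 (iii): `Int(ℤ)` is atomic: every nonzero nonunit is a finite
product of irreducible elements. -/
theorem intValued_atomic (f : IntValued) (hf0 : f ≠ 0) (hfu : ¬IsUnit f) :
    ∃ l : Multiset IntValued, (∀ g ∈ l, Irreducible g) ∧ l.prod = f :=
  IVAux.aux (IVAux.N f) f le_rfl hf0 hfu
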